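/- arXiv:2304.09940 — 9 statements merged into one kernel-verified Lean document; each statement's English description precedes it below -/
import Mathlib

section
/- For every nonnegative integer n there exists a polynomial P_n of degree n with real coefficients such that cos((2n+1)x) = (-1)^n · P_n(cos²(x))·cos(x) for all real x, and moreover the same polynomial P_n works in the identity sin((2n+1)x) = P_n(sin²(x))·sin(x). -/
open Polynomial Real

noncomputable def Qp : ℕ → Polynomial ℝ
  | 0 => 1
  | 1 => C 3 - C 4 * X
  | (n+2) => (C 2 - C 4 * X) * Qp (n+1) - Qp n

lemma Qp_degree : ∀ n, (Qp n).degree = n := by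
  intro n
  induction n using Nat.strong_induction_on with
  | _ n ih =>
    match n with
    | 0 => simp [Qp]
    | 1 =>
      have h : (Qp 1) = C (-4) * X + C 3 := by
        show C 3 - C 4 * X = _
        simp only [map_neg]; ring
      rw [h, Polynomial.degree_linear (by norm_num)]
      norm_cast
    | (n+2) =>
      have h1 : (Qp (n+1)).degree = ((n+1 : ℕ) : WithBot ℕ) := ih (n+1) (by omega)
      have h0 : (Qp n).degree = ((n : ℕ) : WithBot ℕ) := ih n (by omega)
      have hlin : (C (2:ℝ) - C 4 * X).degree = 1 := by
        have h : (C (2:ℝ) - C 4 * X) = C (-4) * X + C 2 := by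
          simp only [map_neg]; ring
        rw [h, Polynomial.degree_linear (by norm_num)]
      have hprod : ((C (2:ℝ) - C 4 * X) * Qp (n+1)).degree = ((n+2 : ℕ) : WithBot ℕ) := by
        rw [Polynomial.degree_mul, hlin, h1]
        norm_cast
        omega
      show ((C (2:ℝ) - C 4 * X) * Qp (n+1) - Qp n).degree = ((n+2 : ℕ) : WithBot ℕ)
      rw [Polynomial.degree_sub_eq_left_of_degree_lt, hprod]
      rw [hprod, h0]
      exact_mod_cast (by omega : n < n + 2)

lemma Qp_sin : ∀ (n : ℕ) (x : ℝ),
    Real.sin ((2 * n + 1) * x) = (Qp n).eval (Real.sin x ^ 2) * Real.sin x := by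
  intro n
  induction n using Nat.strong_induction_on with
  | _ n ih =>
    match n with
    | 0 => intro x; simp [Qp]
    | 1 =>
      intro x
      have h3 : ((2 * ((1:ℕ):ℝ) + 1)) * x = 3 * x := by push_cast; ring
      rw [h3, Real.sin_three_mul]
      show _ = (C (3:ℝ) - C 4 * X).eval _ * _
      simp; ring
    | (n+2) =>
      intro x
      have h1 := ih (n+1) (by omega) x
      have h0 := ih n (by omega) x
      have key : Real.sin ((2 * ((n+2 : ℕ):ℝ) + 1) * x)
          = 2 * Real.sin ((2 * ((n+1 : ℕ):ℝ) + 1) * x) * Real.cos (2 * x)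
            - Real.sin ((2 * ((n : ℕ):ℝ) + 1) * x) := by
        have e1 : (2 * ((n+2 : ℕ):ℝ) + 1) * x
            = (2 * ((n+1 : ℕ):ℝ) + 1) * x + 2 * x := by push_cast; ring
        have e2 : (2 * ((n : ℕ):ℝ) + 1) * x
            = (2 * ((n+1 : ℕ):ℝ) + 1) * x - 2 * x := by push_cast; ring
        rw [e1, e2, Real.sin_add, Real.sin_sub]
        ring
      rw [key, h1, h0, Real.cos_two_mul', Real.cos_sq' x]
      show _ = ((C (2:ℝ) - C 4 * X) * Qp (n+1) - Qp n).eval _ * _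
      simp only [Polynomial.eval_sub, Polynomial.eval_mul, Polynomial.eval_C, Polynomial.eval_X]
      ring

theorem cos_odd_multiple_poly (n : ℕ) :
    ∃ P : Polynomial ℝ, P.degree = n ∧
      (∀ x : ℝ, Real.cos ((2 * n + 1) * x) =
        (-1 : ℝ) ^ n * P.eval (Real.cos x ^ 2) * Real.cos x) ∧
      (∀ x : ℝ, Real.sin ((2 * n + 1) * x) = P.eval (Real.sin x ^ 2) * Real.sin x) := by
  refine ⟨Qp n, Qp_degree n, ?_, Qp_sin n⟩
  intro x
  have hs := Qp_sin n (Real.pi / 2 - x)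
  have hsin2 : Real.sin (Real.pi / 2 - x) = Real.cos x := Real.sin_pi_div_two_sub x
  have harg : (2 * (n : ℝ) + 1) * (Real.pi / 2 - x)
      = (Real.pi / 2 - (2 * (n : ℝ) + 1) * x) + (n : ℝ) * Real.pi := by ring
  have hleft : Real.sin ((2 * (n : ℝ) + 1) * (Real.pi / 2 - x))
      = (-1 : ℝ) ^ n * Real.cos ((2 * (n : ℝ) + 1) * x) := by
    rw [harg, Real.sin_add_nat_mul_pi, Real.sin_pi_div_two_sub]
  rw [hleft, hsin2] at hs
  have hneg : ((-1:ℝ) ^ n) * ((-1:ℝ) ^ n) = 1 := by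
    rw [← pow_add]; simp [pow_mul, neg_one_sq]
  calc Real.cos ((2 * (n:ℝ) + 1) * x)
      = (-1:ℝ)^n * ((-1:ℝ)^n * Real.cos ((2 * (n:ℝ) + 1) * x)) := by
        rw [← mul_assoc, hneg, one_mul]
    _ = (-1:ℝ)^n * ((Qp n).eval (Real.cos x ^ 2) * Real.cos x) := by rw [hs]
    _ = (-1:ℝ)^n * (Qp n).eval (Real.cos x ^ 2) * Real.cos x := by ring
end

section
/- If P_n is the polynomial satisfying sin((2n+1)x) = P_n(sin²(x))·sin(x) for all real x, then P_{n+1}(t²) = P_n(t²)(1 - 2t²) + 2(-1)^n P_n(1 - t²)(1 - t²) for all real t. -/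
theorem poly_recurrence (P : ℕ → Polynomial ℝ)
    (hP : ∀ n : ℕ, ∀ x : ℝ,
      Real.sin ((2 * n + 1) * x) = (P n).eval (Real.sin x ^ 2) * Real.sin x) :
    ∀ n : ℕ, ∀ t : ℝ,
      (P (n + 1)).eval (t ^ 2) =
        (P n).eval (t ^ 2) * (1 - 2 * t ^ 2)
          + 2 * (-1 : ℝ) ^ n * (P n).eval (1 - t ^ 2) * (1 - t ^ 2) := by
  intro n t
  -- key scalar identity for sin x ≠ 0
  have hcosn : Real.cos ((n : ℝ) * Real.pi) = (-1) ^ n := by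
    simpa using Real.cos_nat_mul_pi_sub 0 n
  have key : ∀ x : ℝ, Real.sin x ≠ 0 →
      (P (n + 1)).eval (Real.sin x ^ 2) =
        (P n).eval (Real.sin x ^ 2) * (1 - 2 * Real.sin x ^ 2)
          + 2 * (-1 : ℝ) ^ n * (P n).eval (1 - Real.sin x ^ 2) * (1 - Real.sin x ^ 2) := by
    intro x hs
    have hcos : Real.cos ((2 * n + 1) * x) =
        (-1 : ℝ) ^ n * ((P n).eval (Real.cos x ^ 2) * Real.cos x) := by
      have h1 := hP n (Real.pi / 2 - x)
      have harg : (2 * (n : ℝ) + 1) * (Real.pi / 2 - x) =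
          (n : ℝ) * Real.pi + (Real.pi / 2 - (2 * (n : ℝ) + 1) * x) := by ring
      rw [harg, Real.sin_add, Real.sin_nat_mul_pi, hcosn, Real.sin_pi_div_two_sub,
        Real.sin_pi_div_two_sub, Real.cos_pi_div_two_sub] at h1
      have h2 : (-1 : ℝ) ^ n * Real.cos ((2 * n + 1) * x) =
          (P n).eval (Real.cos x ^ 2) * Real.cos x := by
        linarith [h1]
      have hne : ((-1 : ℝ) ^ n) * ((-1 : ℝ) ^ n) = 1 := by
        rw [← pow_add]
        simp [pow_mul_comm, ← two_mul, pow_mul]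
      calc Real.cos ((2 * n + 1) * x)
          = ((-1 : ℝ) ^ n * (-1 : ℝ) ^ n) * Real.cos ((2 * n + 1) * x) := by rw [hne]; ring
        _ = (-1 : ℝ) ^ n * ((P n).eval (Real.cos x ^ 2) * Real.cos x) := by
            rw [mul_assoc, h2]
    have h3 := hP (n + 1) x
    have harg2 : (2 * ((n : ℝ) + 1) + 1) * x = (2 * (n : ℝ) + 1) * x + 2 * x := by ring
    push_cast at h3
    rw [harg2, Real.sin_add, Real.sin_two_mul, Real.cos_two_mul', hP n x, hcos] at h3
    have hcs : Real.cos x ^ 2 = 1 - Real.sin x ^ 2 := by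
      have := Real.sin_sq_add_cos_sq x; linarith
    rw [hcs] at h3
    -- h3 : P n (s²) * s * (c² - s²) + (-1)^n * (P n (1 - s²) * c) * (2 s c) = P (n+1)(s²) * s
    have h4 : (P (n + 1)).eval (Real.sin x ^ 2) * Real.sin x =
        ((P n).eval (Real.sin x ^ 2) * (1 - 2 * Real.sin x ^ 2)
          + 2 * (-1 : ℝ) ^ n * (P n).eval (1 - Real.sin x ^ 2) * (1 - Real.sin x ^ 2))
          * Real.sin x := by
      linear_combination -h3 + 2 * (-1 : ℝ) ^ n
        * (P n).eval (1 - Real.sin x ^ 2) * Real.sin x * hcs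
    exact mul_right_cancel₀ hs h4
  -- polynomial identity
  set Q : Polynomial ℝ :=
    P (n + 1) - (P n * (1 - 2 * Polynomial.X)
      + Polynomial.C (2 * (-1 : ℝ) ^ n) * (P n).comp (1 - Polynomial.X)
        * (1 - Polynomial.X)) with hQ
  have hQeval : ∀ u : ℝ, Q.eval u =
      (P (n + 1)).eval u - ((P n).eval u * (1 - 2 * u)
        + 2 * (-1 : ℝ) ^ n * (P n).eval (1 - u) * (1 - u)) := by
    intro u
    simp [hQ, Polynomial.eval_comp]
    try ring
  have hQroot : ∀ u ∈ Set.Ioc (0 : ℝ) 1, Q.IsRoot u := by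
    intro u hu
    obtain ⟨hu0, hu1⟩ := hu
    have hsqrt0 : (0 : ℝ) < Real.sqrt u := Real.sqrt_pos.mpr hu0
    have hsqrt1 : Real.sqrt u ≤ 1 := by
      rw [show (1 : ℝ) = Real.sqrt 1 by simp]
      exact Real.sqrt_le_sqrt hu1
    set x := Real.arcsin (Real.sqrt u) with hx
    have hsin : Real.sin x = Real.sqrt u :=
      Real.sin_arcsin (by linarith) hsqrt1
    have hsin2 : Real.sin x ^ 2 = u := by
      rw [hsin, Real.sq_sqrt hu0.le]
    have hne : Real.sin x ≠ 0 := by rw [hsin]; exact hsqrt0.ne'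
    have := key x hne
    rw [hsin2] at this
    unfold Polynomial.IsRoot
    rw [hQeval u, this]
    ring
  have hQ0 : Q = 0 := by
    apply Polynomial.eq_zero_of_infinite_isRoot
    exact (Set.Ioc_infinite (by norm_num : (0:ℝ) < 1)).mono
      (fun u hu => hQroot u hu)
  have := hQeval (t ^ 2)
  rw [hQ0] at this
  simp at this
  linarith [this]
end

section
/- Let f(t) = c₁·exp(i m t) + c₂·exp(i ℓ t) with c₁, c₂ ∈ ℝ nonzero, m, ℓ integers, ℓ > m. If |f(t₁)| = |f(t₂)|, then there exists an integer s with 0 ≤ s ≤ ℓ-m-1 such that either t₁ ≡ t₂ + 2sπ/(ℓ-m) (mod 2π) or t₁ ≡ -t₂ + 2sπ/(ℓ-m) (mod 2π). -/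
lemma absf_aux (c₁ c₂ : ℝ) (a b t : ℝ) :
    (‖(c₁ * Complex.exp (Complex.I * a * t) + c₂ * Complex.exp (Complex.I * b * t))‖)^2
      = c₁^2 + c₂^2 + 2*c₁*c₂*Real.cos ((b-a)*t) := by
  have h1 : Complex.I * (a:ℂ) * t = ((a*t : ℝ) : ℂ) * Complex.I := by push_cast; ring
  have h2 : Complex.I * (b:ℂ) * t = ((b*t : ℝ) : ℂ) * Complex.I := by push_cast; ring
  rw [h1, h2, Complex.exp_mul_I, Complex.exp_mul_I, Complex.sq_norm, Complex.normSq_apply]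
  rw [← Complex.ofReal_cos, ← Complex.ofReal_cos, ← Complex.ofReal_sin, ← Complex.ofReal_sin]
  simp only [Complex.add_re, Complex.add_im, Complex.mul_re, Complex.mul_im,
    Complex.ofReal_re, Complex.ofReal_im, Complex.I_re, Complex.I_im]
  have := Real.sin_sq_add_cos_sq (a*t)
  have h4 := Real.sin_sq_add_cos_sq (b*t)
  have h3 : (b-a)*t = b*t - a*t := by ring
  rw [h3, Real.cos_sub]
  nlinarith [this]

theorem abs_eq_implies_congruence (c₁ c₂ : ℝ) (hc₁ : c₁ ≠ 0) (hc₂ : c₂ ≠ 0)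
    (m ℓ : ℤ) (hml : m < ℓ)
    (f : ℝ → ℂ)
    (hf : ∀ t : ℝ, f t = c₁ * Complex.exp (Complex.I * m * t)
      + c₂ * Complex.exp (Complex.I * ℓ * t))
    (t₁ t₂ : ℝ) (habs : ‖f t₁‖ = ‖f t₂‖) :
    ∃ s : ℤ, 0 ≤ s ∧ s ≤ ℓ - m - 1 ∧
      ((∃ n : ℤ, t₁ - (t₂ + 2 * s * Real.pi / (ℓ - m)) = n * (2 * Real.pi)) ∨
       (∃ n : ℤ, t₁ - (-t₂ + 2 * s * Real.pi / (ℓ - m)) = n * (2 * Real.pi))) := by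
  set d : ℤ := ℓ - m with hd
  have hdpos : 0 < d := by omega
  set kR : ℝ := (ℓ : ℝ) - (m : ℝ) with hkRdef
  have hkR : kR ≠ 0 := by
    have hml' : (m:ℝ) < (ℓ:ℝ) := by exact_mod_cast hml
    have : (0:ℝ) < kR := by rw [hkRdef]; linarith
    linarith
  have hf' : ∀ t : ℝ, f t = c₁ * Complex.exp (Complex.I * ((m:ℝ):ℂ) * t)
      + c₂ * Complex.exp (Complex.I * ((ℓ:ℝ):ℂ) * t) := by
    intro t; rw [hf t]; norm_cast
  have e : (‖f t₁‖)^2 = (‖f t₂‖)^2 := by rw [habs]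
  rw [hf' t₁, hf' t₂, absf_aux, absf_aux] at e
  have hcos : Real.cos (kR * t₁) = Real.cos (kR * t₂) := by
    have h2 : (2*c₁*c₂ : ℝ) ≠ 0 := by
      apply mul_ne_zero (mul_ne_zero (by norm_num) hc₁) hc₂
    apply mul_left_cancel₀ h2
    simp only [hkRdef]
    linarith
  obtain ⟨n, hn | hn⟩ := Real.cos_eq_cos_iff.mp hcos
  · refine ⟨(-n) % d, Int.emod_nonneg _ (by omega), by
      have := Int.emod_lt_of_pos (-n) hdpos; omega, Or.inl ⟨(-n) / d, ?_⟩⟩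
    have hq : (d:ℤ) * ((-n)/d) + (-n) % d = -n := Int.mul_ediv_add_emod _ _
    have hq' : kR * (((-n)/d : ℤ) : ℝ) + (((-n) % d : ℤ) : ℝ) = -(n:ℝ) := by
      rw [hd] at hq
      have := congrArg (fun z : ℤ => (z : ℝ)) hq
      push_cast at this
      rw [hkRdef]
      convert this using 2 <;> push_cast <;> ring
    apply mul_left_cancel₀ hkR
    push_cast
    have hc : kR * (2 * (((-n) % d : ℤ):ℝ) * Real.pi / kR) = 2 * (((-n) % d : ℤ):ℝ) * Real.pi := by
      field_simp
    rw [mul_sub, mul_add, hc]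
    push_cast at hq' ⊢
    linear_combination -hn - 2*Real.pi*hq'
  · refine ⟨n % d, Int.emod_nonneg _ (by omega), by
      have := Int.emod_lt_of_pos n hdpos; omega, Or.inr ⟨n / d, ?_⟩⟩
    have hq : (d:ℤ) * (n/d) + n % d = n := Int.mul_ediv_add_emod _ _
    have hq' : kR * ((n/d : ℤ) : ℝ) + ((n % d : ℤ) : ℝ) = (n:ℝ) := by
      rw [hd] at hq
      have := congrArg (fun z : ℤ => (z : ℝ)) hq
      push_cast at this
      rw [hkRdef]
      convert this using 2 <;> push_cast <;> ring
    apply mul_left_cancel₀ hkR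
    push_cast
    have hc : kR * (2 * ((n % d : ℤ):ℝ) * Real.pi / kR) = 2 * ((n % d : ℤ):ℝ) * Real.pi := by
      field_simp
    rw [mul_sub, mul_add, hc]
    push_cast at hq' ⊢
    linear_combination hn - 2*Real.pi*hq'
end

section
/- Let φ(t) = c₁ cos(mt) + c₂ cos(ℓt) and ψ(t) = c₁ sin(mt) + c₂ sin(ℓt) with c₁, c₂ nonzero reals and m, ℓ nonzero integers, ℓ > m, ℓ ≠ -m. If there exists t₀ with φ'(t₀) = 0 and ψ'(t₀) = 0, then (m c₁)² = (ℓ c₂)². -/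
theorem singular_point_necessary_condition (c₁ c₂ : ℝ) (hc₁ : c₁ ≠ 0) (hc₂ : c₂ ≠ 0)
    (m ℓ : ℤ) (hm : m ≠ 0) (hl : ℓ ≠ 0) (hml : m < ℓ) (hlm : ℓ ≠ -m)
    (φ ψ : ℝ → ℝ)
    (hφ : ∀ t : ℝ, φ t = c₁ * Real.cos (m * t) + c₂ * Real.cos (ℓ * t))
    (hψ : ∀ t : ℝ, ψ t = c₁ * Real.sin (m * t) + c₂ * Real.sin (ℓ * t))
    (t₀ : ℝ) (h₁ : deriv φ t₀ = 0) (h₂ : deriv ψ t₀ = 0) :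
    (m * c₁) ^ 2 = (ℓ * c₂) ^ 2 := by
  have hmt : HasDerivAt (fun t : ℝ => (m : ℝ) * t) (m : ℝ) t₀ := by
    simpa using (hasDerivAt_id t₀).const_mul (m : ℝ)
  have hlt : HasDerivAt (fun t : ℝ => (ℓ : ℝ) * t) (ℓ : ℝ) t₀ := by
    simpa using (hasDerivAt_id t₀).const_mul (ℓ : ℝ)
  have hφd : HasDerivAt φ
      (c₁ * (-Real.sin ((m : ℝ) * t₀) * m) + c₂ * (-Real.sin ((ℓ : ℝ) * t₀) * ℓ)) t₀ := by
    have := (((Real.hasDerivAt_cos ((m : ℝ) * t₀)).comp t₀ hmt).const_mul c₁).add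
      (((Real.hasDerivAt_cos ((ℓ : ℝ) * t₀)).comp t₀ hlt).const_mul c₂)
    have hfe : φ = fun t : ℝ => c₁ * Real.cos ((m : ℝ) * t) + c₂ * Real.cos ((ℓ : ℝ) * t) :=
      funext hφ
    rw [hfe]
    simpa [Function.comp, Pi.add_def] using this
  have hψd : HasDerivAt ψ
      (c₁ * (Real.cos ((m : ℝ) * t₀) * m) + c₂ * (Real.cos ((ℓ : ℝ) * t₀) * ℓ)) t₀ := by
    have := (((Real.hasDerivAt_sin ((m : ℝ) * t₀)).comp t₀ hmt).const_mul c₁).add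
      (((Real.hasDerivAt_sin ((ℓ : ℝ) * t₀)).comp t₀ hlt).const_mul c₂)
    have hfe : ψ = fun t : ℝ => c₁ * Real.sin ((m : ℝ) * t) + c₂ * Real.sin ((ℓ : ℝ) * t) :=
      funext hψ
    rw [hfe]
    simpa [Function.comp, Pi.add_def] using this
  have e₁ := hφd.deriv
  have e₂ := hψd.deriv
  rw [h₁] at e₁
  rw [h₂] at e₂
  have p1 := Real.sin_sq_add_cos_sq ((m : ℝ) * t₀)
  have p2 := Real.sin_sq_add_cos_sq ((ℓ : ℝ) * t₀)
  have s1 : c₁ * m * Real.sin ((m:ℝ)*t₀) + c₂ * ℓ * Real.sin ((ℓ:ℝ)*t₀) = 0 := by linarith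
  have s2 : c₁ * m * Real.cos ((m:ℝ)*t₀) + c₂ * ℓ * Real.cos ((ℓ:ℝ)*t₀) = 0 := by linarith
  linear_combination -((m:ℝ)*c₁)^2 * p1 + ((ℓ:ℝ)*c₂)^2 * p2
    + (c₁ * m * Real.sin ((m:ℝ)*t₀) - c₂ * ℓ * Real.sin ((ℓ:ℝ)*t₀)) * s1
    + (c₁ * m * Real.cos ((m:ℝ)*t₀) - c₂ * ℓ * Real.cos ((ℓ:ℝ)*t₀)) * s2
end

section
/- Let φ(t) = c₁ cos(mt) + c₂ cos(ℓt), ψ(t) = c₁ sin(mt) + c₂ sin(ℓt), with c₁, c₂ nonzero reals, m, ℓ nonzero integers, ℓ > m, ℓ ≠ -m. At any point t where φ'(t) = ψ'(t) = 0, one has φ''(t)² + ψ''(t)² ≠ 0. -/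
private lemma cosDeriv (a k x : ℝ) :
    HasDerivAt (fun t => a * Real.cos (k * t)) (-(a * k * Real.sin (k * x))) x := by
  have h := ((Real.hasDerivAt_cos (k * x)).comp x ((hasDerivAt_id x).const_mul k)).const_mul a
  refine h.congr_deriv ?_
  ring

private lemma sinDeriv (a k x : ℝ) :
    HasDerivAt (fun t => a * Real.sin (k * t)) (a * k * Real.cos (k * x)) x := by
  have h := ((Real.hasDerivAt_sin (k * x)).comp x ((hasDerivAt_id x).const_mul k)).const_mul a
  refine h.congr_deriv ?_
  ring

theorem singular_points_are_double (c₁ c₂ : ℝ) (hc₁ : c₁ ≠ 0) (hc₂ : c₂ ≠ 0)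
    (m ℓ : ℤ) (hm : m ≠ 0) (hl : ℓ ≠ 0) (hml : m < ℓ) (hlm : ℓ ≠ -m)
    (φ ψ : ℝ → ℝ)
    (hφ : ∀ t : ℝ, φ t = c₁ * Real.cos (m * t) + c₂ * Real.cos (ℓ * t))
    (hψ : ∀ t : ℝ, ψ t = c₁ * Real.sin (m * t) + c₂ * Real.sin (ℓ * t))
    (t : ℝ) (h₁ : deriv φ t = 0) (h₂ : deriv ψ t = 0) :
    deriv (deriv φ) t ^ 2 + deriv (deriv ψ) t ^ 2 ≠ 0 := by
  have hφe : φ = fun t => c₁ * Real.cos (m * t) + c₂ * Real.cos (ℓ * t) := funext hφ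
  have hψe : ψ = fun t => c₁ * Real.sin (m * t) + c₂ * Real.sin (ℓ * t) := funext hψ
  have hφ' : deriv φ = fun x => -(c₁ * m * Real.sin (m * x)) + -(c₂ * ℓ * Real.sin (ℓ * x)) := by
    funext x
    rw [hφe]
    exact ((cosDeriv c₁ m x).add (cosDeriv c₂ ℓ x)).deriv
  have hψ' : deriv ψ = fun x => c₁ * m * Real.cos (m * x) + c₂ * ℓ * Real.cos (ℓ * x) := by
    funext x
    rw [hψe]
    exact ((sinDeriv c₁ m x).add (sinDeriv c₂ ℓ x)).deriv
  have hφ'' : deriv (deriv φ) t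
      = -(c₁ * m * (m * Real.cos (m * t))) + -(c₂ * ℓ * (ℓ * Real.cos (ℓ * t))) := by
    rw [hφ']
    have h1 := (sinDeriv (c₁ * m) m t).neg
    have h2 := (sinDeriv (c₂ * ℓ) ℓ t).neg
    have := (h1.add h2).deriv
    exact this.trans (by ring)
  have hψ'' : deriv (deriv ψ) t
      = -(c₁ * m * (m * Real.sin (m * t))) + -(c₂ * ℓ * (ℓ * Real.sin (ℓ * t))) := by
    rw [hψ']
    have h1 := cosDeriv (c₁ * m) m t
    have h2 := cosDeriv (c₂ * ℓ) ℓ t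
    have := (h1.add h2).deriv
    exact this.trans (by ring)
  rw [hφ'] at h₁
  rw [hψ'] at h₂
  simp only at h₁ h₂
  intro hsum
  have hA : deriv (deriv φ) t = 0 ∧ deriv (deriv ψ) t = 0 := by
    constructor <;> nlinarith [sq_nonneg (deriv (deriv φ) t), sq_nonneg (deriv (deriv ψ) t)]
  obtain ⟨hA1, hA2⟩ := hA
  rw [hφ''] at hA1
  rw [hψ''] at hA2
  set C := Real.cos (ℓ * t)
  set S := Real.sin (ℓ * t)
  have hkey : c₂ * (ℓ : ℝ) * ((m : ℝ) - ℓ) ≠ 0 := by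
    have h1 : (ℓ : ℝ) ≠ 0 := Int.cast_ne_zero.mpr hl
    have h2 : (m : ℝ) - ℓ ≠ 0 := sub_ne_zero.mpr (by exact_mod_cast hml.ne)
    exact mul_ne_zero (mul_ne_zero hc₂ h1) h2
  have hC : C = 0 := by
    have : c₂ * (ℓ : ℝ) * ((m : ℝ) - ℓ) * C = 0 := by linear_combination (m : ℝ) * h₂ + hA1
    exact (mul_eq_zero.mp this).resolve_left hkey
  have hS : S = 0 := by
    have : c₂ * (ℓ : ℝ) * ((m : ℝ) - ℓ) * S = 0 := by
      linear_combination (-(m : ℝ)) * h₁ + hA2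
    exact (mul_eq_zero.mp this).resolve_left hkey
  have := Real.sin_sq_add_cos_sq (ℓ * t)
  rw [show Real.sin (ℓ * t) = S from rfl, show Real.cos (ℓ * t) = C from rfl, hC, hS] at this
  norm_num at this
end

section
/- Let m, ℓ be integers with ℓ > m, and c₁ ≠ 0 real with m c₁ = ℓ c₂. Set φ(t) = c₁ cos(mt) + c₂ cos(ℓt), ψ(t) = c₁ sin(mt) + c₂ sin(ℓt). Then φ'(t) = ψ'(t) = 0 if and only if cos(((ℓ-m)/2)·t) = 0, i.e. if and only if t ≡ (2k+1)π/(ℓ-m) (mod 2π) for some integer k with 0 ≤ k ≤ ℓ-m-1. -/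
set_option maxRecDepth 8000 in
theorem singular_points_case_positive (c₁ c₂ : ℝ) (hc₁ : c₁ ≠ 0)
    (m ℓ : ℤ) (hm : m ≠ 0) (hml : m < ℓ) (hc : (m : ℝ) * c₁ = (ℓ : ℝ) * c₂)
    (φ ψ : ℝ → ℝ)
    (hφ : ∀ t : ℝ, φ t = c₁ * Real.cos (m * t) + c₂ * Real.cos (ℓ * t))
    (hψ : ∀ t : ℝ, ψ t = c₁ * Real.sin (m * t) + c₂ * Real.sin (ℓ * t))
    (t : ℝ) :
    ((deriv φ t = 0 ∧ deriv ψ t = 0) ↔ Real.cos (((ℓ : ℝ) - m) / 2 * t) = 0) ∧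
    (Real.cos (((ℓ : ℝ) - m) / 2 * t) = 0 ↔
      ∃ k : ℤ, 0 ≤ k ∧ k ≤ ℓ - m - 1 ∧
        ∃ n : ℤ, t - (2 * k + 1) * Real.pi / (ℓ - m) = n * (2 * Real.pi)) := by
  have hmR : (m : ℝ) ≠ 0 := Int.cast_ne_zero.mpr hm
  have hD : (0 : ℤ) < ℓ - m := by omega
  have hDR : (0 : ℝ) < (ℓ : ℝ) - m := by
    have : (m : ℝ) < ℓ := by exact_mod_cast hml
    linarith
  have hdne : (ℓ : ℝ) - m ≠ 0 := ne_of_gt hDR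
  have hφeq : φ = fun s => c₁ * Real.cos (m * s) + c₂ * Real.cos (ℓ * s) := funext hφ
  have hψeq : ψ = fun s => c₁ * Real.sin (m * s) + c₂ * Real.sin (ℓ * s) := funext hψ
  have hmd : HasDerivAt (fun s : ℝ => (m : ℝ) * s) (m : ℝ) t := by
    simpa using (hasDerivAt_id t).const_mul (m : ℝ)
  have hld : HasDerivAt (fun s : ℝ => (ℓ : ℝ) * s) (ℓ : ℝ) t := by
    simpa using (hasDerivAt_id t).const_mul (ℓ : ℝ)
  have hdφ : deriv φ t = c₁ * (-Real.sin (m * t) * m) + c₂ * (-Real.sin (ℓ * t) * ℓ) := by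
    rw [hφeq]
    exact (((Real.hasDerivAt_cos _).comp t hmd).const_mul c₁ |>.add
      (((Real.hasDerivAt_cos _).comp t hld).const_mul c₂)).deriv
  have hdψ : deriv ψ t = c₁ * (Real.cos (m * t) * m) + c₂ * (Real.cos (ℓ * t) * ℓ) := by
    rw [hψeq]
    exact (((Real.hasDerivAt_sin _).comp t hmd).const_mul c₁ |>.add
      (((Real.hasDerivAt_sin _).comp t hld).const_mul c₂)).deriv
  have hc' : c₂ * (ℓ : ℝ) = c₁ * m := by linarith [hc]
  set A := ((m : ℝ) * t + (ℓ : ℝ) * t) / 2 with hA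
  set B := ((ℓ : ℝ) - m) / 2 * t with hB
  have hsadd : Real.sin (m * t) + Real.sin (ℓ * t) = 2 * Real.sin A * Real.cos B := by
    have h := Real.sin_sub_sin ((m : ℝ) * t) (-((ℓ : ℝ) * t))
    simp only [Real.sin_neg, sub_neg_eq_add] at h
    rw [h, show ((m : ℝ) * t + -((ℓ : ℝ) * t)) / 2 = -B by rw [hB]; ring, Real.cos_neg, hA]
  have hcadd : Real.cos (m * t) + Real.cos (ℓ * t) = 2 * Real.cos A * Real.cos B := by
    rw [Real.cos_add_cos, show ((m : ℝ) * t - (ℓ : ℝ) * t) / 2 = -B by rw [hB]; ring,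
      Real.cos_neg, hA]
  have hdφ' : deriv φ t = -(c₁ * m) * (2 * Real.sin A * Real.cos B) := by
    rw [hdφ, ← hsadd]
    linear_combination (-Real.sin ((ℓ : ℝ) * t)) * hc'
  have hdψ' : deriv ψ t = (c₁ * m) * (2 * Real.cos A * Real.cos B) := by
    rw [hdψ, ← hcadd]
    linear_combination Real.cos ((ℓ : ℝ) * t) * hc'
  have hcm : c₁ * (m : ℝ) ≠ 0 := mul_ne_zero hc₁ hmR
  constructor
  · rw [hdφ', hdψ']
    constructor
    · rintro ⟨h1, h2⟩
      by_contra hcb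
      have hs : Real.sin A = 0 := by
        rcases mul_eq_zero.mp h1 with h | h
        · exact absurd (neg_eq_zero.mp h) hcm
        · rcases mul_eq_zero.mp h with h' | h'
          · rcases mul_eq_zero.mp h' with h'' | h''
            · norm_num at h''
            · exact h''
          · exact absurd h' hcb
      have hcA : Real.cos A = 0 := by
        rcases mul_eq_zero.mp h2 with h | h
        · exact absurd h hcm
        · rcases mul_eq_zero.mp h with h' | h'
          · rcases mul_eq_zero.mp h' with h'' | h''
            · norm_num at h''
            · exact h''
          · exact absurd h' hcb
      have hp := Real.sin_sq_add_cos_sq A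
      rw [hs, hcA] at hp; norm_num at hp
    · intro h
      rw [h]; constructor <;> ring
  · rw [Real.cos_eq_zero_iff]
    constructor
    · rintro ⟨j, hj⟩
      refine ⟨j % (ℓ - m), Int.emod_nonneg j (by omega), by
        have := Int.emod_lt_of_pos j hD; omega, j / (ℓ - m), ?_⟩
      rw [hB] at hj
      have ht : t = (2 * j + 1) * Real.pi / ((ℓ : ℝ) - m) := by
        rw [eq_div_iff hdne]
        linarith [hj]
      have hkey : (j : ℝ) = ((ℓ : ℝ) - m) * ((j / (ℓ - m) : ℤ) : ℝ) + ((j % (ℓ - m) : ℤ) : ℝ) := by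
        have h := congrArg (fun z : ℤ => (z : ℝ)) (Int.mul_ediv_add_emod j (ℓ - m))
        push_cast at h
        linarith [h]
      rw [ht, div_sub_div _ _ hdne hdne, div_eq_iff (mul_ne_zero hdne hdne)]
      rw [hkey]
      ring
    · rintro ⟨k, hk0, hk1, n, hn⟩
      refine ⟨k + (ℓ - m) * n, ?_⟩
      have ht : t = (2 * k + 1) * Real.pi / ((ℓ : ℝ) - m) + n * (2 * Real.pi) := by
        linarith [hn]
      rw [hB, ht]
      push_cast
      field_simp
      ring
end

section
/- Let m, ℓ be integers with ℓ > m, and c₁ ≠ 0 real with m c₁ = -ℓ c₂. Set φ(t) = c₁ cos(mt) + c₂ cos(ℓt), ψ(t) = c₁ sin(mt) + c₂ sin(ℓt). Then φ'(t) = ψ'(t) = 0 if and only if sin(((ℓ-m)/2)·t) = 0, i.e. if and only if t ≡ 2kπ/(ℓ-m) (mod 2π) for some integer k with 0 ≤ k ≤ ℓ-m-1. -/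
theorem singular_points_case_negative (c₁ c₂ : ℝ) (hc₁ : c₁ ≠ 0)
    (m ℓ : ℤ) (hm : m ≠ 0) (hml : m < ℓ) (hc : (m : ℝ) * c₁ = -((ℓ : ℝ) * c₂))
    (φ ψ : ℝ → ℝ)
    (hφ : ∀ t : ℝ, φ t = c₁ * Real.cos (m * t) + c₂ * Real.cos (ℓ * t))
    (hψ : ∀ t : ℝ, ψ t = c₁ * Real.sin (m * t) + c₂ * Real.sin (ℓ * t))
    (t : ℝ) :
    ((deriv φ t = 0 ∧ deriv ψ t = 0) ↔ Real.sin (((ℓ : ℝ) - m) / 2 * t) = 0) ∧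
    (Real.sin (((ℓ : ℝ) - m) / 2 * t) = 0 ↔
      ∃ k : ℤ, 0 ≤ k ∧ k ≤ ℓ - m - 1 ∧
        ∃ n : ℤ, t - 2 * k * Real.pi / (ℓ - m) = n * (2 * Real.pi)) := by
  have hφf : φ = fun t : ℝ => c₁ * Real.cos ((m : ℝ) * t) + c₂ * Real.cos ((ℓ : ℝ) * t) :=
    funext hφ
  have hψf : ψ = fun t : ℝ => c₁ * Real.sin ((m : ℝ) * t) + c₂ * Real.sin ((ℓ : ℝ) * t) :=
    funext hψ
  have hmt : HasDerivAt (fun t : ℝ => (m : ℝ) * t) ((m : ℝ) * 1) t :=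
    (hasDerivAt_id t).const_mul _
  have hlt : HasDerivAt (fun t : ℝ => (ℓ : ℝ) * t) ((ℓ : ℝ) * 1) t :=
    (hasDerivAt_id t).const_mul _
  have Hφ : HasDerivAt φ
      (c₁ * (-Real.sin ((m : ℝ) * t) * ((m : ℝ) * 1)) +
        c₂ * (-Real.sin ((ℓ : ℝ) * t) * ((ℓ : ℝ) * 1))) t := by
    rw [hφf]
    exact ((hmt.cos).const_mul c₁).add ((hlt.cos).const_mul c₂)
  have Hψ : HasDerivAt ψ
      (c₁ * (Real.cos ((m : ℝ) * t) * ((m : ℝ) * 1)) +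
        c₂ * (Real.cos ((ℓ : ℝ) * t) * ((ℓ : ℝ) * 1))) t := by
    rw [hψf]
    exact ((hmt.sin).const_mul c₁).add ((hlt.sin).const_mul c₂)
  have hφd : deriv φ t =
      (m : ℝ) * c₁ * (Real.sin ((ℓ : ℝ) * t) - Real.sin ((m : ℝ) * t)) := by
    rw [Hφ.deriv]; linear_combination (-Real.sin ((ℓ : ℝ) * t)) * hc
  have hψd : deriv ψ t =
      (m : ℝ) * c₁ * (Real.cos ((m : ℝ) * t) - Real.cos ((ℓ : ℝ) * t)) := by
    rw [Hψ.deriv]; linear_combination (Real.cos ((ℓ : ℝ) * t)) * hc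
  have hmc : (m : ℝ) * c₁ ≠ 0 :=
    mul_ne_zero (Int.cast_ne_zero.mpr hm) hc₁
  have hdpos : (0 : ℝ) < (ℓ : ℝ) - m := by
    have : (m : ℝ) < (ℓ : ℝ) := by exact_mod_cast hml
    linarith
  have hdne : ((ℓ : ℝ) - m) ≠ 0 := ne_of_gt hdpos
  have e1 := Real.sin_sub_sin ((ℓ : ℝ) * t) ((m : ℝ) * t)
  have e2 := Real.cos_sub_cos ((ℓ : ℝ) * t) ((m : ℝ) * t)
  have ha : ((ℓ : ℝ) * t - (m : ℝ) * t) / 2 = ((ℓ : ℝ) - m) / 2 * t := by ring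
  have hb : ((ℓ : ℝ) * t + (m : ℝ) * t) / 2 = ((ℓ : ℝ) + m) / 2 * t := by ring
  rw [ha, hb] at e1 e2
  constructor
  · constructor
    · rintro ⟨h1, h2⟩
      rw [hφd] at h1; rw [hψd] at h2
      have hs : Real.sin ((ℓ : ℝ) * t) - Real.sin ((m : ℝ) * t) = 0 :=
        (mul_eq_zero.mp h1).resolve_left hmc
      have hcc : Real.cos ((m : ℝ) * t) - Real.cos ((ℓ : ℝ) * t) = 0 :=
        (mul_eq_zero.mp h2).resolve_left hmc
      have P := Real.sin_sq_add_cos_sq (((ℓ : ℝ) + m) / 2 * t)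
      rw [e1] at hs
      have hcc' : Real.cos ((ℓ : ℝ) * t) - Real.cos ((m : ℝ) * t) = 0 := by linarith
      rw [e2] at hcc'
      nlinarith [hs, hcc', P, sq_nonneg (Real.sin (((ℓ : ℝ) - m) / 2 * t))]
    · intro hs
      obtain ⟨n, hn⟩ := Real.sin_eq_zero_iff.mp hs
      have hat : (ℓ : ℝ) * t = (m : ℝ) * t + (n : ℝ) * (2 * Real.pi) := by
        linear_combination 2 * hn.symm
      rw [hφd, hψd, hat, Real.sin_add_int_mul_two_pi, Real.cos_add_int_mul_two_pi]
      constructor <;> ring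
  · constructor
    · intro hs
      obtain ⟨j, hj⟩ := Real.sin_eq_zero_iff.mp hs
      have hd0 : (0 : ℤ) < ℓ - m := by omega
      refine ⟨j % (ℓ - m), Int.emod_nonneg j (by omega), ?_, j / (ℓ - m), ?_⟩
      · have := Int.emod_lt_of_pos j hd0; omega
      · have hdiv := Int.mul_ediv_add_emod j (ℓ - m)
        have hcast : ((ℓ : ℝ) - m) * ((j / (ℓ - m) : ℤ) : ℝ) + ((j % (ℓ - m) : ℤ) : ℝ)
            = (j : ℝ) := by exact_mod_cast congrArg (Int.cast : ℤ → ℝ) hdiv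
        have ht : t = 2 * (j : ℝ) * Real.pi / ((ℓ : ℝ) - m) := by
          field_simp
          linear_combination (-2) * hj
        rw [ht]
        field_simp
        linear_combination (-1) * hcast
    · rintro ⟨k, -, -, n, hn⟩
      have ht : t = 2 * (k : ℝ) * Real.pi / ((ℓ : ℝ) - m) + (n : ℝ) * (2 * Real.pi) := by
        linarith [hn]
      have : ((ℓ : ℝ) - m) / 2 * t = ((k + n * (ℓ - m) : ℤ) : ℝ) * Real.pi := by
        rw [ht]
        push_cast
        field_simp
      rw [this, Real.sin_int_mul_pi]
end

section
/- Let x(t) = c₁ cos(mt) + c₂ cos(ℓt), y(t) = c₁ sin(mt) + c₂ sin(ℓt), z(t) = a sin(((ℓ-m)/2)·t), with c₁ c₂ < 0 and a² = -4 c₁ c₂. Then x(t)² + y(t)² - z(t)² = (c₁ + c₂)² for all real t. -/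
theorem constant_precession_on_hyperboloid (c₁ c₂ a : ℝ) (m ℓ : ℤ)
    (hc : c₁ * c₂ < 0) (ha : a ^ 2 = -(4 * c₁ * c₂)) (t : ℝ) :
    (c₁ * Real.cos (m * t) + c₂ * Real.cos (ℓ * t)) ^ 2
      + (c₁ * Real.sin (m * t) + c₂ * Real.sin (ℓ * t)) ^ 2
      - (a * Real.sin (((ℓ : ℝ) - m) / 2 * t)) ^ 2 = (c₁ + c₂) ^ 2 := by
  have h1 : Real.sin (((ℓ : ℝ) - m) / 2 * t) ^ 2
      = 1 / 2 - Real.cos (((ℓ : ℝ) * t - m * t)) / 2 := by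
    have h : ((ℓ : ℝ) * t - m * t) = 2 * (((ℓ : ℝ) - m) / 2 * t) := by ring
    rw [Real.sin_sq, h]
    linear_combination -Real.cos_sq (((ℓ : ℝ) - m) / 2 * t)
  have h2 : Real.cos ((ℓ : ℝ) * t - m * t)
      = Real.cos (ℓ * t) * Real.cos (m * t) + Real.sin (ℓ * t) * Real.sin (m * t) :=
    Real.cos_sub _ _
  have p1 := Real.sin_sq_add_cos_sq ((m : ℝ) * t)
  have p2 := Real.sin_sq_add_cos_sq ((ℓ : ℝ) * t)
  rw [h2] at h1
  linear_combination c₁ ^ 2 * p1 + c₂ ^ 2 * p2 - a ^ 2 * h1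
    - (1 / 2 - 1 * (Real.cos (ℓ * t) * Real.cos (m * t) + Real.sin (ℓ * t) * Real.sin (m * t)) / 2) * ha
end

section
/- Let R > r > 0, p, q coprime positive integers, p ≥ 2. Suppose t ≢ τ (mod 2π), sin(pt) = sin(pτ), cos(pt) = cos(pτ), and cos(qt) = cos(qτ). Then there exist integers k, j with 1 ≤ k ≤ p-1 and 0 ≤ j ≤ q-1 such that t - τ ≡ 2kπ/p (mod 2π) and t + τ ≡ 2jπ/q (mod 2π). -/
theorem torus_knot_intersection_params (R r : ℝ) (hr : 0 < r) (hRr : r < R)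
    (p q : ℕ) (hp : 2 ≤ p) (hq : 0 < q) (hpq : Nat.Coprime p q)
    (t τ : ℝ)
    (hne : ¬ ∃ n : ℤ, t - τ = n * (2 * Real.pi))
    (h₁ : Real.sin (p * t) = Real.sin (p * τ))
    (h₂ : Real.cos (p * t) = Real.cos (p * τ))
    (h₃ : Real.cos (q * t) = Real.cos (q * τ)) :
    ∃ k j : ℤ, 1 ≤ k ∧ k ≤ (p : ℤ) - 1 ∧ 0 ≤ j ∧ j ≤ (q : ℤ) - 1 ∧
      (∃ n : ℤ, (t - τ) - 2 * k * Real.pi / p = n * (2 * Real.pi)) ∧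
      (∃ n : ℤ, (t + τ) - 2 * j * Real.pi / q = n * (2 * Real.pi)) := by
  have hπ : Real.pi ≠ 0 := Real.pi_ne_zero
  have hp0 : (0:ℤ) < (p:ℤ) := by exact_mod_cast Nat.lt_of_lt_of_le (by norm_num) hp
  have hq0 : (0:ℤ) < (q:ℤ) := by exact_mod_cast hq
  have hpR : (p:ℝ) ≠ 0 := by positivity
  have hqR : (q:ℝ) ≠ 0 := by positivity
  -- From sin & cos equal at p: cos(p(t-τ)) = 1
  have hcos1 : Real.cos ((p:ℝ) * t - (p:ℝ) * τ) = 1 := by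
    rw [Real.cos_sub, h₁, h₂]
    linear_combination Real.sin_sq_add_cos_sq ((p:ℝ) * τ)
  obtain ⟨m, hm⟩ := (Real.cos_eq_one_iff _).mp hcos1
  -- p ∤ m, otherwise t - τ is a multiple of 2π
  have hpm : ¬ ((p:ℤ) ∣ m) := by
    rintro ⟨c, rfl⟩
    apply hne
    refine ⟨c, ?_⟩
    have : (p:ℝ) * (t - τ) = (p:ℝ) * ((c:ℝ) * (2 * Real.pi)) := by
      push_cast at hm ⊢
      linarith [hm]
    have := mul_left_cancel₀ hpR this
    push_cast at this
    linarith [this]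
  -- analyze cos(qt) = cos(qτ)
  obtain ⟨c, hc | hc⟩ := Real.cos_eq_cos_iff.mp h₃
  · -- q(t - τ) = -2cπ : leads to contradiction via coprimality
    exfalso
    have key : ((q:ℤ) * m : ℝ) * (2 * Real.pi) = ((p:ℤ) * (-c) : ℝ) * (2 * Real.pi) := by
      push_cast
      have h1 : (q:ℝ) * ((p:ℝ) * t - (p:ℝ) * τ) = (q:ℝ) * ((m:ℝ) * (2 * Real.pi)) := by
        rw [hm]
      nlinarith [hc, h1]
    have hqm : (q:ℤ) * m = (p:ℤ) * (-c) := by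
      have h2π : (2 * Real.pi) ≠ 0 := by positivity
      have := mul_right_cancel₀ h2π key
      exact_mod_cast this
    have : (p:ℤ) ∣ (q:ℤ) * m := ⟨-c, hqm⟩
    have hcop : IsCoprime (p:ℤ) (q:ℤ) := Int.isCoprime_iff_gcd_eq_one.mpr (by exact_mod_cast hpq)
    exact hpm (hcop.dvd_of_dvd_mul_left this)
  · -- q(t + τ) = 2cπ
    have hsum : (q:ℝ) * (t + τ) = (c:ℝ) * (2 * Real.pi) := by
      push_cast at hc ⊢
      linarith [hc]
    refine ⟨m % p, c % q, ?_, ?_, Int.emod_nonneg c (by omega), ?_, ?_, ?_⟩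
    · have h0 : 0 ≤ m % (p:ℤ) := Int.emod_nonneg m (by omega)
      have hne0 : m % (p:ℤ) ≠ 0 := fun h => hpm (Int.dvd_of_emod_eq_zero h)
      omega
    · have := Int.emod_lt_of_pos m hp0
      omega
    · have := Int.emod_lt_of_pos c hq0
      omega
    · refine ⟨m / p, ?_⟩
      have hdm : (m : ℝ) = (p:ℝ) * ((m / p : ℤ) : ℝ) + ((m % p : ℤ) : ℝ) := by
        exact_mod_cast congrArg (Int.cast : ℤ → ℝ) (Int.mul_ediv_add_emod m p).symm
      have ht : (p:ℝ) * (t - τ) = (m:ℝ) * (2 * Real.pi) := by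
        push_cast at hm ⊢; linarith [hm]
      field_simp
      push_cast at hdm ⊢
      linear_combination ht + 2 * Real.pi * hdm
    · refine ⟨c / q, ?_⟩
      have hdc : (c : ℝ) = (q:ℝ) * ((c / q : ℤ) : ℝ) + ((c % q : ℤ) : ℝ) := by
        exact_mod_cast congrArg (Int.cast : ℤ → ℝ) (Int.mul_ediv_add_emod c q).symm
      field_simp
      push_cast at hdc ⊢
      linear_combination hsum + 2 * Real.pi * hdc
end
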